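/- Let G be a finite simple graph with a linear order on its vertex set, let A be the adjacency matrix (over the reals) of the symmetric lift HL'₂(G), and for each edge e of G oriented as (u,v) with u < v, let f_e be the real vector indexed by the vertices of HL'₂(G) whose entry at (u,v) is +1, whose entry at (v,u) is −1, and which is 0 elsewhere. Then for all edges e and e' of G, f_eᵀ A f_{e'} = 2 · M(G)_{e,e'}, where M(G) is the signed overlap matrix of G. In other words, the matrix M(G) represents the adjacency operator of HL'₂(G) restricted to the subspace of vectors g satisfying g(u,v) = −g(v,u). -/

import Mathlib

open SimpleGraph

/-- The symmetric lift `HL'₂(G)`: vertices are ordered pairs `(u,v)` with `{u,v}` an edge of `G`;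
distinct vertices `(u,v)` and `(x,y)` are adjacent iff `u = x` or `v = y`. -/
def symLift {V : Type*} (G : SimpleGraph V) : SimpleGraph {p : V × V // G.Adj p.1 p.2} where
  Adj a b := a ≠ b ∧ (a.val.1 = b.val.1 ∨ a.val.2 = b.val.2)
  symm := ⟨fun _ _ h => ⟨h.1.symm, h.2.imp Eq.symm Eq.symm⟩⟩
  loopless := ⟨fun _ h => h.1 rfl⟩
open scoped Classical in
/-- The signed overlap matrix `M(G)` over `ℝ`. -/
noncomputable def signedOverlap {V : Type*} (G : SimpleGraph V) (r : LinearOrder V) :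
    Matrix {p : V × V // r.lt p.1 p.2 ∧ G.Adj p.1 p.2}
      {p : V × V // r.lt p.1 p.2 ∧ G.Adj p.1 p.2} ℝ :=
  fun e f =>
    if e = f then 0
    else if e.val.1 = f.val.1 ∨ e.val.2 = f.val.2 then 1
    else if e.val.1 = f.val.2 ∨ e.val.2 = f.val.1 then -1
    else 0

open scoped Classical in
/-- The antisymmetric test vector `f_e` attached to an oriented edge `e = (u,v)` (with `u < v`):
`+1` at the vertex `(u,v)` of the symmetric lift, `-1` at `(v,u)`, and `0` elsewhere. -/
noncomputable def fVec {V : Type*} (G : SimpleGraph V) (r : LinearOrder V)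
    (e : {p : V × V // r.lt p.1 p.2 ∧ G.Adj p.1 p.2}) :
    {p : V × V // G.Adj p.1 p.2} → ℝ :=
  fun a =>
    if a.val = e.val then 1
    else if a.val = (e.val.2, e.val.1) then -1
    else 0

section Aux
variable {V : Type*} (G : SimpleGraph V) (r : LinearOrder V)

/-- Plus lift of an oriented edge. -/
def epm (e : {p : V × V // r.lt p.1 p.2 ∧ G.Adj p.1 p.2}) : {p : V × V // G.Adj p.1 p.2} :=
  ⟨e.val, e.prop.2⟩

/-- Minus lift of an oriented edge. -/
def emm (e : {p : V × V // r.lt p.1 p.2 ∧ G.Adj p.1 p.2}) : {p : V × V // G.Adj p.1 p.2} :=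
  ⟨(e.val.2, e.val.1), e.prop.2.symm⟩

open scoped Classical in
lemma fVec_eq (e : {p : V × V // r.lt p.1 p.2 ∧ G.Adj p.1 p.2}) :
    fVec G r e = fun a =>
      (if a = epm G r e then (1:ℝ) else 0) - (if a = emm G r e then 1 else 0) := by
  funext a
  have h1 : (a = epm G r e) ↔ a.val = e.val := by
    simp [epm, Subtype.ext_iff]
  have h2 : (a = emm G r e) ↔ a.val = (e.val.2, e.val.1) := by
    simp [emm, Subtype.ext_iff]
  have hne : ¬ (a.val = e.val ∧ a.val = (e.val.2, e.val.1)) := by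
    rintro ⟨hp, hq⟩
    rw [hp] at hq
    have := e.prop.1
    rw [Prod.ext_iff] at hq
    rw [hq.1] at this
    rw [hq.2] at this
    exact lt_irrefl _ this
  simp only [fVec]
  by_cases hA : a.val = e.val
  · have hA' : a = epm G r e := h1.mpr hA
    have hB : ¬ a.val = (e.val.2, e.val.1) := fun h => hne ⟨hA, h⟩
    have hB' : ¬ a = emm G r e := fun h => hB (h2.mp h)
    rw [if_pos hA, if_pos hA', if_neg hB']
    norm_num
  · have hA' : ¬ a = epm G r e := fun h => hA (h1.mp h)
    by_cases hB : a.val = (e.val.2, e.val.1)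
    · have hB' : a = emm G r e := h2.mpr hB
      rw [if_neg hA, if_pos hB, if_neg hA', if_pos hB']
      norm_num
    · have hB' : ¬ a = emm G r e := fun h => hB (h2.mp h)
      rw [if_neg hA, if_neg hB, if_neg hA', if_neg hB']
      norm_num

end Aux

open Matrix in
open scoped Classical in
/-- `f_eᵀ A f_{e'} = 2 M(G)_{e,e'}`: the signed overlap matrix represents the adjacency
operator of the symmetric lift restricted to the antisymmetric subspace. -/
theorem stmt_17 {V : Type*} [Fintype V] (G : SimpleGraph V) (r : LinearOrder V) :
    ∀ e e' : {p : V × V // r.lt p.1 p.2 ∧ G.Adj p.1 p.2},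
      fVec G r e ⬝ᵥ ((symLift G).adjMatrix ℝ) *ᵥ fVec G r e' =
        2 * signedOverlap G r e e' := by
  intro e e'
  have key : fVec G r e ⬝ᵥ ((symLift G).adjMatrix ℝ) *ᵥ fVec G r e' =
      ((symLift G).adjMatrix ℝ) (epm G r e) (epm G r e')
      - ((symLift G).adjMatrix ℝ) (epm G r e) (emm G r e')
      - ((symLift G).adjMatrix ℝ) (emm G r e) (epm G r e')
      + ((symLift G).adjMatrix ℝ) (emm G r e) (emm G r e') := by
    rw [fVec_eq G r e, fVec_eq G r e']
    simp only [dotProduct, mulVec, dotProduct, sub_mul, mul_sub, ite_mul, one_mul, zero_mul,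
      mul_ite, mul_one, mul_zero, Finset.sum_sub_distrib, Finset.sum_ite_eq',
      Finset.mem_univ, if_true]
    ring
  rw [key]
  have hval : ∀ (a b : {p : V × V // G.Adj p.1 p.2}),
      ((symLift G).adjMatrix ℝ) a b =
        if a ≠ b ∧ (a.val.1 = b.val.1 ∨ a.val.2 = b.val.2) then 1 else 0 := by
    intro a b
    rw [adjMatrix_apply]
    exact if_congr Iff.rfl rfl rfl
  rw [hval, hval, hval, hval]
  obtain ⟨⟨u, v⟩, huv, hadj⟩ := e
  obtain ⟨⟨x, y⟩, hxy, hadj'⟩ := e'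
  have hne1 : u ≠ v := ne_of_lt huv
  have hne2 : x ≠ y := ne_of_lt hxy
  have hcross : ¬ (u = y ∧ v = x) := by
    rintro ⟨h1, h2⟩
    exact lt_irrefl x (lt_trans (lt_of_lt_of_eq hxy h1.symm) (lt_of_lt_of_eq huv h2))
  simp only [epm, emm, signedOverlap, ne_eq, Subtype.mk.injEq, Prod.mk.injEq]
  clear key hval
  by_cases hux : u = x <;> by_cases hvy : v = y <;> by_cases huy : u = y <;>
    by_cases hvx : v = x <;> simp_all <;> norm_num
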